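/- Let X be Uniform[0,1] and Y be Uniform[−1,1] independent, let P be the distribution of XY, and let D be the mixture (1/2)δ₀ + (1/2)P where δ₀ is the point mass at 0. Then D can be written as a mixture (ln 2 / 4)·U + (1 − ln 2/4)·Q, where U is the Uniform[−1/2, 1/2] distribution and Q is some probability distribution. -/

import Mathlib

open MeasureTheory

/-- The Uniform[0,1] distribution on ℝ. -/
noncomputable def unif01 : Measure ℝ := volume.restrict (Set.Icc (0 : ℝ) 1)

/-- The Uniform[-1,1] distribution on ℝ. -/
noncomputable def unifSym : Measure ℝ :=
  (2 : ENNReal)⁻¹ • volume.restrict (Set.Icc (-1 : ℝ) 1)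

/-- The Uniform[-1/2,1/2] distribution on ℝ. -/
noncomputable def unifHalf : Measure ℝ :=
  volume.restrict (Set.Icc (-(1 / 2) : ℝ) (1 / 2))

/-- The law of the product `XY` of independent `X ~ Uniform[0,1]` and
`Y ~ Uniform[-1,1]`. -/
noncomputable def prodLaw : Measure ℝ :=
  Measure.map (fun p : ℝ × ℝ => p.1 * p.2) (unif01.prod unifSym)

instance : IsProbabilityMeasure unif01 := by
  constructor
  simp [unif01, Real.volume_Icc]

instance : IsProbabilityMeasure unifSym := by
  constructor
  simp only [unifSym, Measure.smul_apply, Measure.restrict_apply MeasurableSet.univ,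
    Set.univ_inter, Real.volume_Icc, smul_eq_mul]
  rw [show (1 : ℝ) - (-1) = 2 by norm_num]
  simp [ENNReal.ofReal_ofNat]
  exact ENNReal.inv_mul_cancel (by norm_num) (by norm_num)

instance : IsProbabilityMeasure unifHalf := by
  constructor
  simp [unifHalf, Real.volume_Icc]
  norm_num

instance : IsProbabilityMeasure prodLaw :=
  Measure.isProbabilityMeasure_map (measurable_fst.mul measurable_snd).aemeasurable

lemma lintegral_inv_Icc :
    ∫⁻ x in Set.Icc ((1:ℝ)/2) 1, ENNReal.ofReal x⁻¹ = ENNReal.ofReal (Real.log 2) := by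
  rw [Measure.restrict_congr_set MeasureTheory.Ioc_ae_eq_Icc.symm]
  have hint : IntegrableOn (fun x : ℝ => x⁻¹) (Set.Ioc ((1:ℝ)/2) 1) volume := by
    have : IntervalIntegrable (fun x : ℝ => x⁻¹) volume ((1:ℝ)/2) 1 := by
      apply intervalIntegral.intervalIntegrable_inv
      · intro x hx
        rw [Set.uIcc_of_le (by norm_num)] at hx
        exact ne_of_gt (lt_of_lt_of_le (by norm_num) hx.1)
      · exact continuousOn_id
    exact (intervalIntegrable_iff_integrableOn_Ioc_of_le (by norm_num)).mp this
  rw [← ofReal_integral_eq_lintegral_ofReal hint]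
  · congr 1
    rw [← intervalIntegral.integral_of_le (by norm_num)]
    rw [integral_inv (by rw [Set.uIcc_of_le (by norm_num)]; intro h; linarith [h.1])]
    norm_num
  · filter_upwards [self_mem_ae_restrict measurableSet_Ioc] with x hx
    exact le_of_lt (inv_pos.mpr (lt_of_lt_of_le (by norm_num : (0:ℝ) < 1/2) (le_of_lt hx.1)))

lemma key_bound {s : Set ℝ} (hs : MeasurableSet s) :
    ENNReal.ofReal (Real.log 2 / 2) * unifHalf s ≤ prodLaw s := by
  set s' : Set ℝ := s ∩ Set.Icc (-(1/2) : ℝ) (1/2) with hs'def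
  have hs' : MeasurableSet s' := hs.inter measurableSet_Icc
  have hV : unifHalf s = volume s' := by
    rw [unifHalf, Measure.restrict_apply hs]
  have hVfin : volume s' ≠ ⊤ := by
    refine ne_of_lt (lt_of_le_of_lt (measure_mono Set.inter_subset_right) ?_)
    rw [Real.volume_Icc]; exact ENNReal.ofReal_lt_top
  -- express prodLaw s via Fubini
  have hmap : prodLaw s = ∫⁻ x, unifSym ((x * ·) ⁻¹' s) ∂unif01 := by
    rw [prodLaw, Measure.map_apply (f := fun p : ℝ × ℝ => p.1 * p.2) (measurable_fst.mul measurable_snd) hs,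
      Measure.prod_apply (s := (fun p : ℝ × ℝ => p.1 * p.2) ⁻¹' s) ((measurable_fst.mul measurable_snd) hs)]
    rfl
  rw [hmap, hV]
  -- restrict integral to [1/2, 1]
  have hrestr : ∫⁻ x in Set.Icc ((1:ℝ)/2) 1, unifSym ((x * ·) ⁻¹' s)
      ≤ ∫⁻ x, unifSym ((x * ·) ⁻¹' s) ∂unif01 := by
    apply lintegral_mono'
    · exact Measure.restrict_mono (by intro x hx; constructor <;> [linarith [hx.1]; exact hx.2]) le_rfl
    · exact fun x => le_rfl
  refine le_trans ?_ hrestr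
  -- pointwise bound on [1/2,1]
  have hpt : ∀ x ∈ Set.Icc ((1:ℝ)/2) 1,
      2⁻¹ * volume s' * ENNReal.ofReal x⁻¹ ≤ unifSym ((x * ·) ⁻¹' s) := by
    intro x hx
    have hx0 : (0:ℝ) < x := lt_of_lt_of_le (by norm_num) hx.1
    have hsub : ((x * ·) ⁻¹' s') ⊆ Set.Icc (-1 : ℝ) 1 := by
      intro y hy
      rcases hy.2 with ⟨h1, h2⟩
      constructor <;> nlinarith [hx.1, hx.2]
    have hcalc : unifSym ((x * ·) ⁻¹' s') = 2⁻¹ * (ENNReal.ofReal x⁻¹ * volume s') := by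
      rw [unifSym, Measure.smul_apply, Measure.restrict_apply ((measurable_const_mul x) hs'),
        Set.inter_eq_self_of_subset_left hsub, Real.volume_preimage_mul_left (ne_of_gt hx0),
        abs_of_pos (inv_pos.mpr hx0), smul_eq_mul]
    have hmono : unifSym ((x * ·) ⁻¹' s') ≤ unifSym ((x * ·) ⁻¹' s) :=
      measure_mono (Set.preimage_mono Set.inter_subset_left)
    refine le_trans (le_of_eq ?_) (le_trans (le_of_eq hcalc.symm) hmono)
    ring
  calc ENNReal.ofReal (Real.log 2 / 2) * volume s'
      = 2⁻¹ * volume s' * ENNReal.ofReal (Real.log 2) := by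
        rw [ENNReal.ofReal_div_of_pos (by norm_num), ENNReal.ofReal_ofNat, div_eq_mul_inv]
        ring
    _ = 2⁻¹ * volume s' * ∫⁻ x in Set.Icc ((1:ℝ)/2) 1, ENNReal.ofReal x⁻¹ := by
        rw [lintegral_inv_Icc]
    _ = ∫⁻ x in Set.Icc ((1:ℝ)/2) 1, 2⁻¹ * volume s' * ENNReal.ofReal x⁻¹ := by
        rw [lintegral_const_mul' _ _ (by
          exact ENNReal.mul_ne_top (by norm_num) hVfin)]
    _ ≤ ∫⁻ x in Set.Icc ((1:ℝ)/2) 1, unifSym ((x * ·) ⁻¹' s) := by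
        apply lintegral_mono_ae
        filter_upwards [self_mem_ae_restrict measurableSet_Icc] with x hx
        exact hpt x hx

/-- The mixture `D = (1/2)δ₀ + (1/2)P` is itself a mixture of the
Uniform[-1/2,1/2] distribution with weight `ln 2 / 4` and some probability
distribution `Q`. -/
theorem mixture_contains_uniform :
    ∃ Q : Measure ℝ, IsProbabilityMeasure Q ∧
      (2 : ENNReal)⁻¹ • Measure.dirac (0 : ℝ) + (2 : ENNReal)⁻¹ • prodLaw
        = ENNReal.ofReal (Real.log 2 / 4) • unifHalf
            + ENNReal.ofReal (1 - Real.log 2 / 4) • Q := by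
  set c : ENNReal := ENNReal.ofReal (Real.log 2 / 4) with hc
  set k : ENNReal := ENNReal.ofReal (1 - Real.log 2 / 4) with hk
  set D : Measure ℝ :=
    (2 : ENNReal)⁻¹ • Measure.dirac (0 : ℝ) + (2 : ENNReal)⁻¹ • prodLaw with hD
  have hlog_pos : (0:ℝ) < Real.log 2 := Real.log_pos (by norm_num)
  have hlog_lt : Real.log 2 / 4 < 1 := by
    have := Real.log_le_sub_one_of_pos (show (0:ℝ) < 2 by norm_num)
    linarith
  have hle : c • unifHalf ≤ D := by
    rw [Measure.le_iff]
    intro s hs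
    have h1 : (c • unifHalf) s = 2⁻¹ * (ENNReal.ofReal (Real.log 2 / 2) * unifHalf s) := by
      rw [Measure.smul_apply, smul_eq_mul, ← mul_assoc]
      congr 1
      rw [hc, show Real.log 2 / 4 = (Real.log 2 / 2) / 2 by ring,
        ENNReal.ofReal_div_of_pos (by norm_num), ENNReal.ofReal_ofNat, div_eq_mul_inv]
      ring
    rw [h1, hD]
    calc 2⁻¹ * (ENNReal.ofReal (Real.log 2 / 2) * unifHalf s)
        ≤ 2⁻¹ * prodLaw s := by
          exact mul_le_mul_right (key_bound hs) _
      _ ≤ ((2 : ENNReal)⁻¹ • Measure.dirac (0 : ℝ) + (2 : ENNReal)⁻¹ • prodLaw) s := by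
          rw [Measure.add_apply, Measure.smul_apply, smul_eq_mul]
          exact le_add_self
  have hfin : IsFiniteMeasure (c • unifHalf) := by
    constructor
    rw [Measure.smul_apply, smul_eq_mul, measure_univ, mul_one]
    exact ENNReal.ofReal_lt_top
  set R : Measure ℝ := D - c • unifHalf with hR
  have hRadd : R + c • unifHalf = D := Measure.sub_add_cancel_of_le hle
  have hDuniv : D Set.univ = 1 := by
    simp only [hD, Measure.add_apply, Measure.smul_apply, measure_univ, smul_eq_mul, mul_one]
    exact ENNReal.inv_two_add_inv_two
  have hRuniv : R Set.univ = k := by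
    rw [hR, Measure.sub_apply MeasurableSet.univ hle, hDuniv, Measure.smul_apply,
      measure_univ, smul_eq_mul, mul_one, hk, hc,
      ENNReal.ofReal_sub _ (by positivity), ENNReal.ofReal_one]
  have hk0 : k ≠ 0 := by
    rw [hk]
    simp only [ne_eq, ENNReal.ofReal_eq_zero, not_le]
    linarith
  have hktop : k ≠ ⊤ := ENNReal.ofReal_ne_top
  refine ⟨k⁻¹ • R, ?_, ?_⟩
  · constructor
    rw [Measure.smul_apply, hRuniv, smul_eq_mul, ENNReal.inv_mul_cancel hk0 hktop]
  · rw [smul_smul, ENNReal.mul_inv_cancel hk0 hktop, one_smul, ← hRadd]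
    rw [add_comm]
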